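/- For a pure target state Φ with largest Schmidt coefficient λ₀ and any separable state ρ, the extractability satisfies Ξ(ρ → Φ) = λ₀². In particular, for any product state ρ_A ⊗ ρ_B and any local channels Λ_A, Λ_B, the fidelity F((Λ_A ⊗ Λ_B)(ρ_A ⊗ ρ_B), Φ) ≤ λ₀², with equality attainable. -/

import Mathlib

open Matrix ComplexOrder Kronecker

/-- A density matrix: positive semidefinite with unit trace. -/
def IsDensity {n : Type*} [Fintype n] [DecidableEq n] (ρ : Matrix n n ℂ) : Prop :=
  ρ.PosSemidef ∧ ρ.trace = 1

/-- A completely positive trace-preserving map (Choi-matrix formulation of CP). -/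
def IsCPTP {m n : Type*} [Fintype m] [DecidableEq m] [Fintype n] [DecidableEq n]
    (Λ : Matrix m m ℂ →ₗ[ℂ] Matrix n n ℂ) : Prop :=
  (Matrix.PosSemidef (Matrix.of fun (p q : m × n) =>
      Λ (Matrix.single p.1 q.1 1) p.2 q.2)) ∧
  ∀ ρ : Matrix m m ℂ, (Λ ρ).trace = ρ.trace

/-- The tensor product `Λ_A ⊗ Λ_B` of two linear maps on matrix spaces. -/
noncomputable def tensorMap {a b a' b' : Type*}
    [Fintype a] [DecidableEq a] [Fintype b] [DecidableEq b]
    [Fintype a'] [DecidableEq a'] [Fintype b'] [DecidableEq b']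
    (ΛA : Matrix a a ℂ →ₗ[ℂ] Matrix a' a' ℂ) (ΛB : Matrix b b ℂ →ₗ[ℂ] Matrix b' b' ℂ)
    (ρ : Matrix (a × b) (a × b) ℂ) : Matrix (a' × b') (a' × b') ℂ :=
  ∑ i, ∑ j, ∑ k, ∑ l, ρ (i, k) (j, l) •
    (ΛA (Matrix.single i j 1)) ⊗ₖ (ΛB (Matrix.single k l 1))

section ExtrHelpers

open Finset


variable {n : Type*} [Fintype n] [DecidableEq n]

theorem Matrix.posSemidef_iff_eq_transpose_mul_self {A : Matrix n n ℂ} :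
    A.PosSemidef ↔ ∃ B : Matrix n n ℂ, A = Bᴴ * B := by
  open scoped MatrixOrder Matrix.Norms.L2Operator in
  refine ⟨fun hA => ?_, fun ⟨B, h⟩ => h ▸ Matrix.posSemidef_conjTranspose_mul_self B⟩
  obtain ⟨B, rfl⟩ := CStarAlgebra.nonneg_iff_eq_star_mul_self.mp hA.nonneg
  exact ⟨B, rfl⟩

lemma psd_diag_re_nonneg {M : Matrix n n ℂ} (hM : M.PosSemidef) (i : n) :
    0 ≤ (M i i).re := by
  have h := hM.dotProduct_mulVec_nonneg (Pi.single i 1)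
  have h2 : star (Pi.single i 1 : n → ℂ) ⬝ᵥ (M *ᵥ Pi.single i 1) = M i i := by
    simp [dotProduct, mulVec, Pi.single_apply, Finset.mul_sum]
  rw [h2] at h
  exact (Complex.le_def.mp h).1

lemma trace_mul_psd_re_nonneg {S T : Matrix n n ℂ} (hS : S.PosSemidef) (hT : T.PosSemidef) :
    0 ≤ ((S * T).trace).re := by
  obtain ⟨B, rfl⟩ := Matrix.posSemidef_iff_eq_transpose_mul_self.mp hT
  have h1 : (S * (Bᴴ * B)).trace = (B * S * Bᴴ).trace := by
    rw [← mul_assoc, Matrix.trace_mul_cycle]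
  rw [h1]
  have h2 : (B * S * Bᴴ).PosSemidef := hS.mul_mul_conjTranspose_same B
  rw [Matrix.trace, Complex.re_sum]
  exact Finset.sum_nonneg fun i _ => psd_diag_re_nonneg h2 i

lemma cs_norm {ι : Type*} [Fintype ι] (a b : ι → ℂ) :
    ‖∑ i, (starRingEnd ℂ) (a i) * b i‖ ≤
      Real.sqrt (∑ i, ‖a i‖ ^ 2) * Real.sqrt (∑ i, ‖b i‖ ^ 2) := by
  let x : EuclideanSpace ℂ ι := WithLp.toLp 2 a
  let y : EuclideanSpace ℂ ι := WithLp.toLp 2 b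
  have h := norm_inner_le_norm (𝕜 := ℂ) x y
  rw [PiLp.inner_apply, EuclideanSpace.norm_eq, EuclideanSpace.norm_eq] at h
  simpa [RCLike.inner_apply, x, y, mul_comm] using h

lemma conj_mul_self_re (z : ℂ) : ((starRingEnd ℂ) z * z).re = ‖z‖ ^ 2 := by
  rw [mul_comm, Complex.mul_conj, Complex.ofReal_re, Complex.normSq_eq_norm_sq]


lemma dot_sum_left {n : Type*} [Fintype n] {m : ℕ} (b : n → ℂ) (w : Fin m → ℂ)
    (g : Fin m → n → ℂ) : (∑ s, w s • g s) ⬝ᵥ b = ∑ s, w s * (g s ⬝ᵥ b) := by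
  simp only [dotProduct, Finset.sum_apply, Pi.smul_apply, smul_eq_mul, Finset.sum_mul,
    Finset.mul_sum]
  rw [Finset.sum_comm]
  exact Finset.sum_congr rfl fun s _ => Finset.sum_congr rfl fun p _ => by ring

lemma dot_sum_right {n : Type*} [Fintype n] {m : ℕ} (a : n → ℂ) (w : Fin m → ℂ)
    (g : Fin m → n → ℂ) : a ⬝ᵥ (∑ t, w t • g t) = ∑ t, w t * (a ⬝ᵥ g t) := by
  simp only [dotProduct, Finset.sum_apply, Pi.smul_apply, smul_eq_mul, Finset.sum_mul,
    Finset.mul_sum]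
  rw [Finset.sum_comm]
  exact Finset.sum_congr rfl fun s _ => Finset.sum_congr rfl fun p _ => by ring

lemma quad_expand {n : Type*} [Fintype n] (N : Matrix n n ℂ) (x y : n → ℂ) :
    star x ⬝ᵥ (N *ᵥ y) = ∑ p, ∑ q, (starRingEnd ℂ) (x p) * N p q * y q := by
  simp only [dotProduct, mulVec, Pi.star_apply, Finset.mul_sum, RCLike.star_def]
  exact Finset.sum_congr rfl fun p _ => Finset.sum_congr rfl fun q _ => by ring

lemma trace_mul_entry {n : Type*} [Fintype n] (M N : Matrix n n ℂ) :
    (M * N).trace = ∑ p, ∑ q, M p q * N q p := by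
  simp [Matrix.trace, Matrix.diag, Matrix.mul_apply]

/-- Bessel-type inequality. -/
lemma bessel {d m : ℕ} (u : Fin m → Fin d → ℂ)
    (hu : ∀ s t, ∑ i, (starRingEnd ℂ) (u s i) * u t i = if s = t then 1 else 0)
    (σ : Matrix (Fin d) (Fin d) ℂ) (hσ : σ.PosSemidef) (hτ : σ.trace = 1) :
    (∑ s, ∑ i, ∑ j, (starRingEnd ℂ) (u s i) * σ i j * u s j).re ≤ 1 := by
  set P : Matrix (Fin d) (Fin d) ℂ := Matrix.of fun i j => ∑ s, u s i * (starRingEnd ℂ) (u s j)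
    with hP
  have hHerm : Pᴴ = P := by
    ext i j
    simp only [conjTranspose_apply, hP, Matrix.of_apply, star_sum, star_mul', RCLike.star_def,
      Complex.conj_conj]
    exact Finset.sum_congr rfl fun s _ => by ring
  have hIdem : P * P = P := by
    ext i j
    simp only [Matrix.mul_apply, hP, Matrix.of_apply, Finset.sum_mul_sum]
    rw [Finset.sum_comm]
    calc ∑ s, ∑ k, ∑ t, (u s i * (starRingEnd ℂ) (u s k)) * (u t k * (starRingEnd ℂ) (u t j))
        = ∑ s, ∑ t, ∑ k, (u s i * (starRingEnd ℂ) (u s k)) * (u t k * (starRingEnd ℂ) (u t j)) :=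
          Finset.sum_congr rfl fun s _ => Finset.sum_comm
      _ = ∑ s, ∑ t, (u s i * (starRingEnd ℂ) (u t j)) *
            ∑ k, (starRingEnd ℂ) (u s k) * u t k := by
          refine Finset.sum_congr rfl fun s _ => Finset.sum_congr rfl fun t _ => ?_
          rw [Finset.mul_sum]
          exact Finset.sum_congr rfl fun k _ => by ring
      _ = ∑ s, u s i * (starRingEnd ℂ) (u s j) := by
          refine Finset.sum_congr rfl fun s _ => ?_
          simp [hu, mul_ite]
  have hP0 : P * (1 - P) = 0 := by rw [Matrix.mul_sub, Matrix.mul_one, hIdem, sub_self]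
  have h1mP : (1 - P).PosSemidef := by
    have h1 : (1 - P)ᴴ * (1 - P) = 1 - P := by
      rw [conjTranspose_sub, conjTranspose_one, hHerm, Matrix.sub_mul, Matrix.one_mul, hP0,
        sub_zero]
    exact h1 ▸ Matrix.posSemidef_conjTranspose_mul_self (1 - P)
  have htr : (σ * P).trace = ∑ s, ∑ i, ∑ j, (starRingEnd ℂ) (u s i) * σ i j * u s j := by
    rw [trace_mul_entry]
    simp only [hP, Matrix.of_apply, Finset.mul_sum]
    rw [Finset.sum_comm]
    calc ∑ k, ∑ i, ∑ s, σ i k * (u s k * (starRingEnd ℂ) (u s i))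
        = ∑ k, ∑ s, ∑ i, σ i k * (u s k * (starRingEnd ℂ) (u s i)) :=
          Finset.sum_congr rfl fun k _ => Finset.sum_comm
      _ = ∑ s, ∑ k, ∑ i, σ i k * (u s k * (starRingEnd ℂ) (u s i)) := Finset.sum_comm
      _ = ∑ s, ∑ i, ∑ j, (starRingEnd ℂ) (u s i) * σ i j * u s j := by
          refine Finset.sum_congr rfl fun s _ => ?_
          rw [Finset.sum_comm]
          exact Finset.sum_congr rfl fun i _ => Finset.sum_congr rfl fun j _ => by ring
  have h0 : 0 ≤ ((σ * (1 - P)).trace).re := trace_mul_psd_re_nonneg hσ h1mP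
  rw [Matrix.mul_sub, Matrix.mul_one, Matrix.trace_sub, Complex.sub_re, hτ] at h0
  rw [← htr]
  simpa using h0


/-- Entrywise formula for a linear map on matrices. -/
lemma lin_apply_entry {m n : Type*} [Fintype m] [DecidableEq m] [Fintype n] [DecidableEq n]
    (Λ : Matrix m m ℂ →ₗ[ℂ] Matrix n n ℂ) (ρ : Matrix m m ℂ) (p q : n) :
    Λ ρ p q = ∑ i, ∑ j, ρ i j * Λ (Matrix.single i j 1) p q := by
  have h : ∀ i j, (Matrix.single i j (ρ i j) : Matrix m m ℂ)
      = ρ i j • Matrix.single i j 1 := fun i j => by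
    rw [Matrix.smul_single, smul_eq_mul, mul_one]
  conv_lhs => rw [Matrix.matrix_eq_sum_single ρ]
  simp_rw [_root_.map_sum, h, _root_.map_smul]
  simp [Matrix.sum_apply, Matrix.smul_apply, smul_eq_mul]

lemma reorder4 {ι κ : Type*} [Fintype ι] [Fintype κ] (a : ι → ι → ℂ) (h : ι → ι → κ → κ → ℂ) :
    ∑ p, ∑ q, ∑ i, ∑ j, a i j * h i j p q = ∑ i, ∑ j, a i j * ∑ p, ∑ q, h i j p q := by
  calc ∑ p, ∑ q, ∑ i, ∑ j, a i j * h i j p q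
      = ∑ p, ∑ i, ∑ q, ∑ j, a i j * h i j p q :=
        Finset.sum_congr rfl fun p _ => Finset.sum_comm
    _ = ∑ i, ∑ p, ∑ q, ∑ j, a i j * h i j p q := Finset.sum_comm
    _ = ∑ i, ∑ p, ∑ j, ∑ q, a i j * h i j p q :=
        Finset.sum_congr rfl fun i _ => Finset.sum_congr rfl fun p _ => Finset.sum_comm
    _ = ∑ i, ∑ j, ∑ p, ∑ q, a i j * h i j p q := Finset.sum_congr rfl fun i _ => Finset.sum_comm
    _ = ∑ i, ∑ j, a i j * ∑ p, ∑ q, h i j p q := by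
        refine Finset.sum_congr rfl fun i _ => Finset.sum_congr rfl fun j _ => ?_
        simp only [Finset.mul_sum]

lemma sum_mul_reorder {ι : Type*} [Fintype ι] (f : ι → ι → ι → ℂ) (g : ι → ι → ℂ) :
    ∑ i, ∑ j, (∑ r, f r i j) * g i j = ∑ r, ∑ i, ∑ j, f r i j * g i j := by
  calc ∑ i, ∑ j, (∑ r, f r i j) * g i j
      = ∑ i, ∑ j, ∑ r, f r i j * g i j :=
        Finset.sum_congr rfl fun i _ => Finset.sum_congr rfl fun j _ => Finset.sum_mul ..

    _ = ∑ i, ∑ r, ∑ j, f r i j * g i j := Finset.sum_congr rfl fun i _ => Finset.sum_comm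
    _ = ∑ r, ∑ i, ∑ j, f r i j * g i j := Finset.sum_comm

lemma cptp_posSemidef {m n : Type*} [Fintype m] [DecidableEq m] [Fintype n] [DecidableEq n]
    {Λ : Matrix m m ℂ →ₗ[ℂ] Matrix n n ℂ} (hΛ : IsCPTP Λ)
    {ρ : Matrix m m ℂ} (hρ : ρ.PosSemidef) : (Λ ρ).PosSemidef := by
  obtain ⟨B, hB⟩ := Matrix.posSemidef_iff_eq_transpose_mul_self.mp hρ
  set C : Matrix (m × n) (m × n) ℂ := Matrix.of fun (p q : m × n) =>
      Λ (Matrix.single p.1 q.1 1) p.2 q.2 with hC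
  have hCpsd : C.PosSemidef := hΛ.1
  have hE : ∀ p q, Λ ρ p q = ∑ i, ∑ j, ρ i j * C (i, p) (j, q) := fun p q =>
    lin_apply_entry Λ ρ p q
  have hρij : ∀ i j, ρ i j = ∑ r, (starRingEnd ℂ) (B r i) * B r j := by
    intro i j
    rw [hB]
    simp [Matrix.mul_apply, Matrix.conjTranspose_apply, RCLike.star_def]
  refine Matrix.PosSemidef.of_dotProduct_mulVec_nonneg ?_ ?_
  · ext p q
    rw [Matrix.conjTranspose_apply, hE q p, hE p q, star_sum]
    rw [Finset.sum_comm]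
    refine Finset.sum_congr rfl fun i _ => ?_
    rw [star_sum]
    refine Finset.sum_congr rfl fun j _ => ?_
    rw [star_mul', ← Matrix.conjTranspose_apply ρ, hρ.1, ← Matrix.conjTranspose_apply C, hCpsd.1]
  · intro y
    have hGdef : star y ⬝ᵥ (Λ ρ *ᵥ y) = ∑ i, ∑ j, ρ i j *
        (∑ p, ∑ q, (starRingEnd ℂ) (y p) * C (i, p) (j, q) * y q) := by
      rw [quad_expand]
      simp_rw [hE]
      rw [← reorder4 ρ (fun i j p q => (starRingEnd ℂ) (y p) * C (i, p) (j, q) * y q)]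
      refine Finset.sum_congr rfl fun p _ => Finset.sum_congr rfl fun q _ => ?_
      simp only [Finset.sum_mul, Finset.mul_sum]
      exact Finset.sum_congr rfl fun i _ => Finset.sum_congr rfl fun j _ => by ring
    have hzeq : ∀ r : m, star (fun ip : m × n => B r ip.1 * y ip.2) ⬝ᵥ
        (C *ᵥ fun ip : m × n => B r ip.1 * y ip.2)
        = ∑ i, ∑ j, ((starRingEnd ℂ) (B r i) * B r j) *
            (∑ p, ∑ q, (starRingEnd ℂ) (y p) * C (i, p) (j, q) * y q) := by
      intro r
      rw [quad_expand]
      rw [Fintype.sum_prod_type]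
      refine Finset.sum_congr rfl fun i _ => ?_
      calc ∑ p, ∑ jq : m × n, (starRingEnd ℂ) (B r i * y p) * C (i, p) jq * (B r jq.1 * y jq.2)
          = ∑ p, ∑ j, ∑ q, (starRingEnd ℂ) (B r i * y p) * C (i, p) (j, q) * (B r j * y q) :=
            Finset.sum_congr rfl fun p _ => by rw [Fintype.sum_prod_type]
        _ = ∑ j, ∑ p, ∑ q, (starRingEnd ℂ) (B r i * y p) * C (i, p) (j, q) * (B r j * y q) :=
            Finset.sum_comm
        _ = ∑ j, ((starRingEnd ℂ) (B r i) * B r j) *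
              (∑ p, ∑ q, (starRingEnd ℂ) (y p) * C (i, p) (j, q) * y q) := by
            refine Finset.sum_congr rfl fun j _ => ?_
            simp only [Finset.mul_sum, _root_.map_mul]
            exact Finset.sum_congr rfl fun p _ => Finset.sum_congr rfl fun q _ => by ring
    have hsum : star y ⬝ᵥ (Λ ρ *ᵥ y) = ∑ r : m, star (fun ip : m × n => B r ip.1 * y ip.2) ⬝ᵥ
        (C *ᵥ fun ip : m × n => B r ip.1 * y ip.2) := by
      rw [hGdef]
      simp_rw [hzeq, hρij]
      exact sum_mul_reorder (fun r i j => (starRingEnd ℂ) (B r i) * B r j) _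
    rw [hsum]
    exact Finset.sum_nonneg fun r _ => hCpsd.dotProduct_mulVec_nonneg _

lemma cptp_isDensity {m n : Type*} [Fintype m] [DecidableEq m] [Fintype n] [DecidableEq n]
    {Λ : Matrix m m ℂ →ₗ[ℂ] Matrix n n ℂ} (hΛ : IsCPTP Λ)
    {ρ : Matrix m m ℂ} (hρ : IsDensity ρ) : IsDensity (Λ ρ) :=
  ⟨cptp_posSemidef hΛ hρ.1, (hΛ.2 ρ).trans hρ.2⟩

lemma kron_conjTranspose {a b c d : Type*} (A : Matrix a b ℂ) (B : Matrix c d ℂ) :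
    (A ⊗ₖ B)ᴴ = Aᴴ ⊗ₖ Bᴴ := by
  ext p q
  simp [Matrix.conjTranspose_apply, Matrix.kroneckerMap_apply, star_mul', mul_comm]

lemma posSemidef_kron {a b : Type*} [Fintype a] [DecidableEq a] [Fintype b] [DecidableEq b]
    {A : Matrix a a ℂ} {B : Matrix b b ℂ} (hA : A.PosSemidef) (hB : B.PosSemidef) :
    (A ⊗ₖ B).PosSemidef := by
  obtain ⟨R, rfl⟩ := Matrix.posSemidef_iff_eq_transpose_mul_self.mp hA
  obtain ⟨S, rfl⟩ := Matrix.posSemidef_iff_eq_transpose_mul_self.mp hB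
  rw [Matrix.mul_kronecker_mul, ← kron_conjTranspose]
  exact Matrix.posSemidef_conjTranspose_mul_self _

/-- The replacement channel. -/
noncomputable def replCh {d d' : ℕ} (σ : Matrix (Fin d') (Fin d') ℂ) :
    Matrix (Fin d) (Fin d) ℂ →ₗ[ℂ] Matrix (Fin d') (Fin d') ℂ where
  toFun ρ := ρ.trace • σ
  map_add' x y := by
    show (x + y).trace • σ = x.trace • σ + y.trace • σ
    rw [Matrix.trace_add, add_smul]
  map_smul' r x := by
    show (r • x).trace • σ = r • x.trace • σ
    rw [Matrix.trace_smul, smul_eq_mul, mul_smul]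

lemma replCh_apply {d d' : ℕ} (σ : Matrix (Fin d') (Fin d') ℂ) (ρ : Matrix (Fin d) (Fin d) ℂ) :
    replCh σ ρ = ρ.trace • σ := rfl

lemma trace_stdBasisMatrix {d : ℕ} (i j : Fin d) :
    (Matrix.single i j (1:ℂ)).trace = if i = j then 1 else 0 := by
  by_cases h : i = j
  · subst h
    simp [Matrix.trace, Matrix.diag, Matrix.single]
  · simp only [Matrix.trace, Matrix.diag, Matrix.single, Matrix.of_apply, h, if_false]
    refine Finset.sum_eq_zero fun k _ => ?_
    by_cases h1 : i = k <;> by_cases h2 : j = k <;> simp_all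

lemma replCh_cptp {d d' : ℕ} (σ : Matrix (Fin d') (Fin d') ℂ) (hσ : IsDensity σ) :
    IsCPTP (replCh (d := d) σ) := by
  constructor
  · have : (Matrix.of fun (p q : Fin d × Fin d') =>
        replCh (d := d) σ (Matrix.single p.1 q.1 1) p.2 q.2)
        = (1 : Matrix (Fin d) (Fin d) ℂ) ⊗ₖ σ := by
      ext p q
      simp only [Matrix.of_apply, replCh_apply, Matrix.smul_apply, trace_stdBasisMatrix,
        Matrix.kroneckerMap_apply, Matrix.one_apply, smul_eq_mul]
    rw [this]
    exact posSemidef_kron Matrix.PosSemidef.one hσ.1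
  · intro ρ
    rw [replCh_apply, Matrix.trace_smul, smul_eq_mul, hσ.2, mul_one]

/-- `tensorMap` as a linear map in `ρ`. -/
noncomputable def tensorMapL {a b a' b' : Type*}
    [Fintype a] [DecidableEq a] [Fintype b] [DecidableEq b]
    [Fintype a'] [DecidableEq a'] [Fintype b'] [DecidableEq b']
    (ΛA : Matrix a a ℂ →ₗ[ℂ] Matrix a' a' ℂ) (ΛB : Matrix b b ℂ →ₗ[ℂ] Matrix b' b' ℂ) :
    Matrix (a × b) (a × b) ℂ →ₗ[ℂ] Matrix (a' × b') (a' × b') ℂ where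
  toFun := tensorMap ΛA ΛB
  map_add' x y := by
    simp only [tensorMap, Matrix.add_apply, add_smul, Finset.sum_add_distrib]
  map_smul' r x := by
    simp only [tensorMap, Matrix.smul_apply, smul_eq_mul, Finset.smul_sum,
      RingHom.id_apply, smul_smul]

lemma tensorMap_kron {a b a' b' : Type*}
    [Fintype a] [DecidableEq a] [Fintype b] [DecidableEq b]
    [Fintype a'] [DecidableEq a'] [Fintype b'] [DecidableEq b']
    (ΛA : Matrix a a ℂ →ₗ[ℂ] Matrix a' a' ℂ) (ΛB : Matrix b b ℂ →ₗ[ℂ] Matrix b' b' ℂ)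
    (ρA : Matrix a a ℂ) (ρB : Matrix b b ℂ) :
    tensorMap ΛA ΛB (ρA ⊗ₖ ρB) = (ΛA ρA) ⊗ₖ (ΛB ρB) := by
  ext p q
  simp only [tensorMap, Matrix.sum_apply, Matrix.smul_apply, Matrix.kroneckerMap_apply,
    smul_eq_mul]
  rw [lin_apply_entry ΛA ρA p.1 q.1, lin_apply_entry ΛB ρB p.2 q.2, Finset.sum_mul_sum]
  refine Finset.sum_congr rfl fun i _ => ?_
  rw [Finset.sum_comm]
  refine Finset.sum_congr rfl fun k _ => ?_
  rw [Finset.sum_mul_sum]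
  exact Finset.sum_congr rfl fun j _ => Finset.sum_congr rfl fun l _ => by ring

lemma tensorMap_repl {dA dB dA' dB' : ℕ}
    (σA : Matrix (Fin dA') (Fin dA') ℂ) (σB : Matrix (Fin dB') (Fin dB') ℂ)
    (ρ : Matrix (Fin dA × Fin dB) (Fin dA × Fin dB) ℂ) :
    tensorMap (replCh σA) (replCh σB) ρ = ρ.trace • (σA ⊗ₖ σB) := by
  ext p q
  simp only [tensorMap, Matrix.sum_apply, Matrix.smul_apply, replCh_apply,
    trace_stdBasisMatrix, Matrix.kroneckerMap_apply, smul_eq_mul]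
  simp only [Matrix.smul_apply, smul_eq_mul, ite_mul, one_mul, zero_mul, mul_ite, mul_zero,
    mul_one]
  rw [Matrix.trace]
  rw [Fintype.sum_prod_type]
  simp only [Finset.sum_ite_eq, Finset.mem_univ, if_true, Finset.sum_ite_eq',
    Matrix.diag_apply, Finset.sum_mul]
  refine Finset.sum_congr rfl fun x _ => ?_
  rw [Finset.sum_comm]
  simp [Finset.sum_ite_eq]

lemma kron_fact {dA' dB' : ℕ} (σA : Matrix (Fin dA') (Fin dA') ℂ)
    (σB : Matrix (Fin dB') (Fin dB') ℂ)
    (x x' : Fin dA' → ℂ) (y y' : Fin dB' → ℂ) :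
    star (fun p : Fin dA' × Fin dB' => x p.1 * y p.2) ⬝ᵥ
        ((σA ⊗ₖ σB) *ᵥ fun p : Fin dA' × Fin dB' => x' p.1 * y' p.2)
      = (star x ⬝ᵥ (σA *ᵥ x')) * (star y ⬝ᵥ (σB *ᵥ y')) := by
  rw [quad_expand, quad_expand, quad_expand, Finset.sum_mul_sum]
  simp only [Fintype.sum_prod_type, Matrix.kroneckerMap_apply]
  refine Finset.sum_congr rfl fun p1 _ => Finset.sum_congr rfl fun p2 _ => ?_
  rw [Finset.sum_mul_sum]
  refine Finset.sum_congr rfl fun q1 _ => Finset.sum_congr rfl fun q2 _ => ?_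
  simp only [_root_.map_mul]
  ring

end ExtrHelpers

open Finset in
/-- For a pure target state `Φ` with Schmidt coefficients `c` (largest `λ₀`) and any
separable state `ρ`, the extractability equals `λ₀²`.  In particular, for any product
state and any local channels the extracted fidelity is at most `λ₀²`, and equality is
attainable. -/
theorem extractability_separable {dA dB dA' dB' m : ℕ} [NeZero m]
    (u : Fin m → Fin dA' → ℂ) (v : Fin m → Fin dB' → ℂ)
    (hu : ∀ s t, ∑ i, (starRingEnd ℂ) (u s i) * u t i = if s = t then 1 else 0)
    (hv : ∀ s t, ∑ j, (starRingEnd ℂ) (v s j) * v t j = if s = t then 1 else 0)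
    (c : Fin m → ℝ) (hc : ∀ s, 0 ≤ c s) (hnorm : ∑ s, (c s) ^ 2 = 1)
    (lam0 : ℝ) (hlam0 : IsGreatest (Set.range c) lam0)
    (φ : Fin dA' × Fin dB' → ℂ) (hφ : φ = fun p => ∑ s, (c s : ℂ) * u s p.1 * v s p.2)
    (Φ : Matrix (Fin dA' × Fin dB') (Fin dA' × Fin dB') ℂ)
    (hΦ : Φ = Matrix.of fun p q => φ p * (starRingEnd ℂ) (φ q))
    (ρ : Matrix (Fin dA × Fin dB) (Fin dA × Fin dB) ℂ)
    (hsep : ∃ (k : ℕ) (w : Fin k → ℝ) (ρA : Fin k → Matrix (Fin dA) (Fin dA) ℂ)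
        (ρB : Fin k → Matrix (Fin dB) (Fin dB) ℂ),
        (∀ i, 0 ≤ w i) ∧ (∑ i, w i = 1) ∧ (∀ i, IsDensity (ρA i)) ∧
        (∀ i, IsDensity (ρB i)) ∧ ρ = ∑ i, ((w i : ℝ) : ℂ) • ((ρA i) ⊗ₖ (ρB i))) :
    (sSup {r : ℝ |
        ∃ (ΛA : Matrix (Fin dA) (Fin dA) ℂ →ₗ[ℂ] Matrix (Fin dA') (Fin dA') ℂ)
          (ΛB : Matrix (Fin dB) (Fin dB) ℂ →ₗ[ℂ] Matrix (Fin dB') (Fin dB') ℂ),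
          IsCPTP ΛA ∧ IsCPTP ΛB ∧ r = ((tensorMap ΛA ΛB ρ * Φ).trace).re}
      = lam0 ^ 2) ∧
    (∀ (ΛA : Matrix (Fin dA) (Fin dA) ℂ →ₗ[ℂ] Matrix (Fin dA') (Fin dA') ℂ)
       (ΛB : Matrix (Fin dB) (Fin dB) ℂ →ₗ[ℂ] Matrix (Fin dB') (Fin dB') ℂ),
       IsCPTP ΛA → IsCPTP ΛB →
       ∀ (ρA : Matrix (Fin dA) (Fin dA) ℂ) (ρB : Matrix (Fin dB) (Fin dB) ℂ),
         IsDensity ρA → IsDensity ρB →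
         ((tensorMap ΛA ΛB (ρA ⊗ₖ ρB) * Φ).trace).re ≤ lam0 ^ 2) ∧
    (∀ (ρA : Matrix (Fin dA) (Fin dA) ℂ) (ρB : Matrix (Fin dB) (Fin dB) ℂ),
       IsDensity ρA → IsDensity ρB →
       ∃ (ΛA : Matrix (Fin dA) (Fin dA) ℂ →ₗ[ℂ] Matrix (Fin dA') (Fin dA') ℂ)
         (ΛB : Matrix (Fin dB) (Fin dB) ℂ →ₗ[ℂ] Matrix (Fin dB') (Fin dB') ℂ),
         IsCPTP ΛA ∧ IsCPTP ΛB ∧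
         ((tensorMap ΛA ΛB (ρA ⊗ₖ ρB) * Φ).trace).re = lam0 ^ 2) := by
  obtain ⟨k, w, ρAs, ρBs, hw0, hw1, hdAs, hdBs, hρdef⟩ := hsep
  obtain ⟨s0, hs0⟩ := hlam0.1
  have hle : ∀ s, c s ≤ lam0 := fun s => hlam0.2 ⟨s, rfl⟩
  have hlam0nn : 0 ≤ lam0 := hs0 ▸ hc s0
  -- the pure-state vectors
  have hψ : φ = ∑ s, (c s : ℂ) • (fun p : Fin dA' × Fin dB' => u s p.1 * v s p.2) := by
    funext p
    rw [hφ]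
    simp [Finset.sum_apply, mul_assoc]
  -- trace against Φ as quadratic form
  have h1 : ∀ (M : Matrix (Fin dA' × Fin dB') (Fin dA' × Fin dB') ℂ),
      (M * Φ).trace = star φ ⬝ᵥ (M *ᵥ φ) := by
    intro M
    rw [trace_mul_entry, quad_expand, hΦ]
    refine Finset.sum_congr rfl fun p _ => Finset.sum_congr rfl fun q _ => ?_
    simp only [Matrix.of_apply]
    ring
  have hMφ : ∀ (M : Matrix (Fin dA' × Fin dB') (Fin dA' × Fin dB') ℂ),
      M *ᵥ φ = ∑ t, (c t : ℂ) • (M *ᵥ fun p : Fin dA' × Fin dB' => u t p.1 * v t p.2) := by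
    intro M
    conv_lhs => rw [hψ]
    rw [← Matrix.mulVecLin_apply, _root_.map_sum]
    simp [Matrix.mulVecLin_apply]
  have hstarφ : star φ = ∑ s, (c s : ℂ) •
      star (fun p : Fin dA' × Fin dB' => u s p.1 * v s p.2) := by
    funext p
    rw [hψ]
    simp only [Pi.star_apply, Finset.sum_apply, Pi.smul_apply, smul_eq_mul, star_sum,
      star_mul', RCLike.star_def, Complex.conj_ofReal]
  have h2 : ∀ (M : Matrix (Fin dA' × Fin dB') (Fin dA' × Fin dB') ℂ),
      star φ ⬝ᵥ (M *ᵥ φ) = ∑ s, ∑ t, ((c s : ℂ) * (c t : ℂ)) *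
        (star (fun p : Fin dA' × Fin dB' => u s p.1 * v s p.2) ⬝ᵥ
          (M *ᵥ fun p : Fin dA' × Fin dB' => u t p.1 * v t p.2)) := by
    intro M
    rw [hstarφ, hMφ, dot_sum_left]
    refine Finset.sum_congr rfl fun s _ => ?_
    rw [dot_sum_right, Finset.mul_sum]
    exact Finset.sum_congr rfl fun t _ => by ring
  -- the key expansion
  have hexpand : ∀ (σA : Matrix (Fin dA') (Fin dA') ℂ) (σB : Matrix (Fin dB') (Fin dB') ℂ),
      ((σA ⊗ₖ σB) * Φ).trace = ∑ s, ∑ t, ((c s : ℂ) * (c t : ℂ)) *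
        ((∑ i, ∑ j, (starRingEnd ℂ) (u s i) * σA i j * u t j) *
         (∑ p, ∑ q, (starRingEnd ℂ) (v s p) * σB p q * v t q)) := by
    intro σA σB
    rw [h1, h2]
    refine Finset.sum_congr rfl fun s _ => Finset.sum_congr rfl fun t _ => ?_
    rw [kron_fact, quad_expand, quad_expand]
  -- the fidelity bound for product density matrices
  have hbound : ∀ (σA : Matrix (Fin dA') (Fin dA') ℂ) (σB : Matrix (Fin dB') (Fin dB') ℂ),
      IsDensity σA → IsDensity σB → (((σA ⊗ₖ σB) * Φ).trace).re ≤ lam0 ^ 2 := by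
    intro σA σB hσA hσB
    obtain ⟨R, hR⟩ := Matrix.posSemidef_iff_eq_transpose_mul_self.mp hσA.1
    obtain ⟨S, hS⟩ := Matrix.posSemidef_iff_eq_transpose_mul_self.mp hσB.1
    have hA : ∀ s t, (∑ i, ∑ j, (starRingEnd ℂ) (u s i) * σA i j * u t j)
        = ∑ r, (starRingEnd ℂ) ((R *ᵥ u s) r) * (R *ᵥ u t) r := by
      intro s t
      rw [← quad_expand σA (u s) (u t), hR, ← Matrix.mulVec_mulVec,
        Matrix.dotProduct_mulVec, ← Matrix.star_mulVec]
      simp [dotProduct, Pi.star_apply, RCLike.star_def]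
    have hB : ∀ s t, (∑ p, ∑ q, (starRingEnd ℂ) (v s p) * σB p q * v t q)
        = ∑ r, (starRingEnd ℂ) ((S *ᵥ v s) r) * (S *ᵥ v t) r := by
      intro s t
      rw [← quad_expand σB (v s) (v t), hS, ← Matrix.mulVec_mulVec,
        Matrix.dotProduct_mulVec, ← Matrix.star_mulVec]
      simp [dotProduct, Pi.star_apply, RCLike.star_def]
    set α : Fin m → ℝ := fun s => ∑ r, ‖(R *ᵥ u s) r‖ ^ 2 with hα
    set β : Fin m → ℝ := fun s => ∑ r, ‖(S *ᵥ v s) r‖ ^ 2 with hβ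
    have hα0 : ∀ s, 0 ≤ α s := fun s => Finset.sum_nonneg fun r _ => sq_nonneg _
    have hβ0 : ∀ s, 0 ≤ β s := fun s => Finset.sum_nonneg fun r _ => sq_nonneg _
    have hAb : ∀ s t, ‖(∑ i, ∑ j, (starRingEnd ℂ) (u s i) * σA i j * u t j)‖ ≤
        Real.sqrt (α s) * Real.sqrt (α t) := by
      intro s t
      rw [hA]
      exact cs_norm _ _
    have hBb : ∀ s t, ‖(∑ p, ∑ q, (starRingEnd ℂ) (v s p) * σB p q * v t q)‖ ≤
        Real.sqrt (β s) * Real.sqrt (β t) := by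
      intro s t
      rw [hB]
      exact cs_norm _ _
    have hαsum : ∑ s, α s ≤ 1 := by
      have hb := bessel u hu σA hσA.1 hσA.2
      rw [Complex.re_sum] at hb
      calc ∑ s, α s = ∑ s, (∑ i, ∑ j, (starRingEnd ℂ) (u s i) * σA i j * u s j).re := by
            refine Finset.sum_congr rfl fun s _ => ?_
            rw [hA s s, Complex.re_sum]
            exact (Finset.sum_congr rfl fun r _ => (conj_mul_self_re _)).symm
        _ ≤ 1 := hb
    have hβsum : ∑ s, β s ≤ 1 := by
      have hb := bessel v hv σB hσB.1 hσB.2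
      rw [Complex.re_sum] at hb
      calc ∑ s, β s = ∑ s, (∑ i, ∑ j, (starRingEnd ℂ) (v s i) * σB i j * v s j).re := by
            refine Finset.sum_congr rfl fun s _ => ?_
            rw [hB s s, Complex.re_sum]
            exact (Finset.sum_congr rfl fun r _ => (conj_mul_self_re _)).symm
        _ ≤ 1 := hb
    have hg0 : ∀ s, 0 ≤ c s * (Real.sqrt (α s) * Real.sqrt (β s)) := fun s =>
      mul_nonneg (hc s) (mul_nonneg (Real.sqrt_nonneg _) (Real.sqrt_nonneg _))
    rw [hexpand, Complex.re_sum]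
    calc ∑ s, (∑ t, ((c s : ℂ) * (c t : ℂ)) *
            ((∑ i, ∑ j, (starRingEnd ℂ) (u s i) * σA i j * u t j) *
             (∑ p, ∑ q, (starRingEnd ℂ) (v s p) * σB p q * v t q))).re
        = ∑ s, ∑ t, (((c s : ℂ) * (c t : ℂ)) *
            ((∑ i, ∑ j, (starRingEnd ℂ) (u s i) * σA i j * u t j) *
             (∑ p, ∑ q, (starRingEnd ℂ) (v s p) * σB p q * v t q))).re := by
          exact Finset.sum_congr rfl fun s _ => Complex.re_sum _ _
      _ ≤ ∑ s, ∑ t, (c s * (Real.sqrt (α s) * Real.sqrt (β s))) *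
            (c t * (Real.sqrt (α t) * Real.sqrt (β t))) := by
          refine Finset.sum_le_sum fun s _ => Finset.sum_le_sum fun t _ => ?_
          have hcast : ((c s : ℂ) * (c t : ℂ)) = ((c s * c t : ℝ) : ℂ) := by push_cast; ring
          rw [hcast, Complex.re_ofReal_mul]
          have h5 : (((∑ i, ∑ j, (starRingEnd ℂ) (u s i) * σA i j * u t j) *
              (∑ p, ∑ q, (starRingEnd ℂ) (v s p) * σB p q * v t q))).re ≤
              (Real.sqrt (α s) * Real.sqrt (α t)) * (Real.sqrt (β s) * Real.sqrt (β t)) := by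
            refine le_trans (Complex.re_le_norm _) ?_
            rw [norm_mul]
            exact mul_le_mul (hAb s t) (hBb s t) (norm_nonneg _)
              (mul_nonneg (Real.sqrt_nonneg _) (Real.sqrt_nonneg _))
          calc (c s * c t) * (((∑ i, ∑ j, (starRingEnd ℂ) (u s i) * σA i j * u t j) *
                  (∑ p, ∑ q, (starRingEnd ℂ) (v s p) * σB p q * v t q))).re
              ≤ (c s * c t) * ((Real.sqrt (α s) * Real.sqrt (α t)) *
                  (Real.sqrt (β s) * Real.sqrt (β t))) :=
                mul_le_mul_of_nonneg_left h5 (mul_nonneg (hc s) (hc t))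
            _ = (c s * (Real.sqrt (α s) * Real.sqrt (β s))) *
                  (c t * (Real.sqrt (α t) * Real.sqrt (β t))) := by ring
      _ = (∑ s, c s * (Real.sqrt (α s) * Real.sqrt (β s))) ^ 2 := by
          rw [sq, Finset.sum_mul_sum]
      _ ≤ (lam0 * ∑ s, Real.sqrt (α s) * Real.sqrt (β s)) ^ 2 := by
          refine pow_le_pow_left₀ (Finset.sum_nonneg fun s _ => hg0 s) ?_ 2
          rw [Finset.mul_sum]
          exact Finset.sum_le_sum fun s _ => mul_le_mul_of_nonneg_right (hle s)
            (mul_nonneg (Real.sqrt_nonneg _) (Real.sqrt_nonneg _))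
      _ = lam0 ^ 2 * (∑ s, Real.sqrt (α s) * Real.sqrt (β s)) ^ 2 := mul_pow _ _ _
      _ ≤ lam0 ^ 2 * 1 := by
          refine mul_le_mul_of_nonneg_left ?_ (sq_nonneg lam0)
          refine le_trans (Finset.sum_sq_le_sum_mul_sum_of_sq_eq_mul Finset.univ
            (fun s _ => hα0 s) (fun s _ => hβ0 s) (fun s _ => ?_)) ?_
          · rw [mul_pow, Real.sq_sqrt (hα0 s), Real.sq_sqrt (hβ0 s)]
          · exact mul_le_one₀ hαsum (Finset.sum_nonneg fun s _ => hβ0 s) hβsum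
      _ = lam0 ^ 2 := mul_one _
  -- the optimal product state
  set σA0 : Matrix (Fin dA') (Fin dA') ℂ :=
    Matrix.of fun i j => u s0 i * (starRingEnd ℂ) (u s0 j) with hσA0
  set σB0 : Matrix (Fin dB') (Fin dB') ℂ :=
    Matrix.of fun i j => v s0 i * (starRingEnd ℂ) (v s0 j) with hσB0
  have hdenA0 : IsDensity σA0 := by
    constructor
    · have : σA0 = (Matrix.of fun (_ : Fin 1) j => (starRingEnd ℂ) (u s0 j))ᴴ *
          (Matrix.of fun (_ : Fin 1) j => (starRingEnd ℂ) (u s0 j)) := by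
        ext i j
        simp [Matrix.mul_apply, Matrix.conjTranspose_apply, hσA0]
      rw [this]
      exact Matrix.posSemidef_conjTranspose_mul_self _
    · have h9 := hu s0 s0
      rw [if_pos rfl] at h9
      rw [Matrix.trace, ← h9]
      simp only [Matrix.diag_apply, hσA0, Matrix.of_apply]
      exact Finset.sum_congr rfl fun i _ => by ring
  have hdenB0 : IsDensity σB0 := by
    constructor
    · have : σB0 = (Matrix.of fun (_ : Fin 1) j => (starRingEnd ℂ) (v s0 j))ᴴ *
          (Matrix.of fun (_ : Fin 1) j => (starRingEnd ℂ) (v s0 j)) := by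
        ext i j
        simp [Matrix.mul_apply, Matrix.conjTranspose_apply, hσB0]
      rw [this]
      exact Matrix.posSemidef_conjTranspose_mul_self _
    · have h9 := hv s0 s0
      rw [if_pos rfl] at h9
      rw [Matrix.trace, ← h9]
      simp only [Matrix.diag_apply, hσB0, Matrix.of_apply]
      exact Finset.sum_congr rfl fun i _ => by ring
  have hval : (((σA0 ⊗ₖ σB0) * Φ).trace).re = lam0 ^ 2 := by
    have hA0 : ∀ s t, (∑ i, ∑ j, (starRingEnd ℂ) (u s i) * σA0 i j * u t j)
        = (if s = s0 then (1:ℂ) else 0) * (if s0 = t then (1:ℂ) else 0) := by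
      intro s t
      rw [← hu s s0, ← hu s0 t, Finset.sum_mul_sum]
      refine Finset.sum_congr rfl fun i _ => Finset.sum_congr rfl fun j _ => ?_
      simp only [hσA0, Matrix.of_apply]
      ring
    have hB0 : ∀ s t, (∑ p, ∑ q, (starRingEnd ℂ) (v s p) * σB0 p q * v t q)
        = (if s = s0 then (1:ℂ) else 0) * (if s0 = t then (1:ℂ) else 0) := by
      intro s t
      rw [← hv s s0, ← hv s0 t, Finset.sum_mul_sum]
      refine Finset.sum_congr rfl fun i _ => Finset.sum_congr rfl fun j _ => ?_
      simp only [hσB0, Matrix.of_apply]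
      ring
    rw [hexpand]
    simp_rw [hA0, hB0]
    have hcollapse : ∑ s, ∑ t, ((c s : ℂ) * (c t : ℂ)) *
        (((if s = s0 then (1:ℂ) else 0) * (if s0 = t then (1:ℂ) else 0)) *
         ((if s = s0 then (1:ℂ) else 0) * (if s0 = t then (1:ℂ) else 0)))
        = (c s0 : ℂ) * (c s0 : ℂ) := by
      rw [Finset.sum_eq_single s0]
      · rw [Finset.sum_eq_single s0]
        · simp
        · intro t _ ht
          simp [Ne.symm ht]
        · intro h
          exact absurd (Finset.mem_univ s0) h
      · intro s _ hsne
        rw [Finset.sum_eq_zero]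
        intro t _
        simp [hsne]
      · intro h
        exact absurd (Finset.mem_univ s0) h
    rw [hcollapse, ← Complex.ofReal_mul, Complex.ofReal_re, hs0, sq]
  have htrρ : ρ.trace = 1 := by
    rw [hρdef, Matrix.trace_sum]
    calc ∑ i, (((w i : ℝ) : ℂ) • ((ρAs i) ⊗ₖ (ρBs i))).trace
        = ∑ i, ((w i : ℝ) : ℂ) := by
          refine Finset.sum_congr rfl fun i _ => ?_
          rw [Matrix.trace_smul, smul_eq_mul, Matrix.trace_kronecker, (hdAs i).2, (hdBs i).2,
            mul_one, mul_one]
      _ = ((∑ i, w i : ℝ) : ℂ) := by push_cast; rfl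
      _ = 1 := by rw [hw1, Complex.ofReal_one]
  refine ⟨?_, ?_, ?_⟩
  · -- sSup
    refine IsGreatest.csSup_eq ⟨?_, ?_⟩
    · exact ⟨replCh σA0, replCh σB0, replCh_cptp _ hdenA0, replCh_cptp _ hdenB0, by
        rw [tensorMap_repl, htrρ, one_smul, hval]⟩
    · rintro r ⟨ΛA, ΛB, hΛA, hΛB, rfl⟩
      have h2' : tensorMap ΛA ΛB ρ = ∑ i, ((w i : ℝ) : ℂ) •
          ((ΛA (ρAs i)) ⊗ₖ (ΛB (ρBs i))) := by
        rw [hρdef]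
        have heq : tensorMap ΛA ΛB (∑ i, ((w i : ℝ) : ℂ) • ((ρAs i) ⊗ₖ (ρBs i)))
            = tensorMapL ΛA ΛB (∑ i, ((w i : ℝ) : ℂ) • ((ρAs i) ⊗ₖ (ρBs i))) := rfl
        rw [heq, _root_.map_sum]
        refine Finset.sum_congr rfl fun i _ => ?_
        rw [LinearMap.map_smul]
        congr 1
        exact tensorMap_kron ΛA ΛB (ρAs i) (ρBs i)
      rw [h2', Finset.sum_mul, Matrix.trace_sum, Complex.re_sum]
      have h3 : ∀ i, ((((w i : ℝ) : ℂ) • ((ΛA (ρAs i)) ⊗ₖ (ΛB (ρBs i))) * Φ).trace).re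
          = w i * ((((ΛA (ρAs i)) ⊗ₖ (ΛB (ρBs i))) * Φ).trace).re := by
        intro i
        rw [smul_mul_assoc, Matrix.trace_smul, smul_eq_mul, Complex.re_ofReal_mul]
      calc ∑ i, ((((w i : ℝ) : ℂ) • ((ΛA (ρAs i)) ⊗ₖ (ΛB (ρBs i))) * Φ).trace).re
          = ∑ i, w i * ((((ΛA (ρAs i)) ⊗ₖ (ΛB (ρBs i))) * Φ).trace).re :=
            Finset.sum_congr rfl fun i _ => h3 i
        _ ≤ ∑ i, w i * lam0 ^ 2 := by
            refine Finset.sum_le_sum fun i _ => ?_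
            exact mul_le_mul_of_nonneg_left
              (hbound _ _ (cptp_isDensity hΛA (hdAs i)) (cptp_isDensity hΛB (hdBs i)))
              (hw0 i)
        _ = lam0 ^ 2 := by rw [← Finset.sum_mul, hw1, one_mul]
  · -- upper bound
    intro ΛA ΛB hΛA hΛB ρA ρB hρA hρB
    rw [tensorMap_kron]
    exact hbound _ _ (cptp_isDensity hΛA hρA) (cptp_isDensity hΛB hρB)
  · -- attainability
    intro ρA ρB hρA hρB
    refine ⟨replCh σA0, replCh σB0, replCh_cptp _ hdenA0, replCh_cptp _ hdenB0, ?_⟩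
    have htr1 : (ρA ⊗ₖ ρB).trace = 1 := by
      rw [Matrix.trace_kronecker, hρA.2, hρB.2, mul_one]
    rw [tensorMap_repl, htr1, one_smul, hval]
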